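/- Let M = ⊕_{n≥1} M_n be a positively graded vector space over a field K with each M_n finite-dimensional, and suppose M has intermediate growth, i.e. limsup_n log⁺(dim M_n)/n = 0. Then the symmetric algebra S(M), with its induced grading, also has intermediate growth. -/

import Mathlib

/-- `log⁺ x = log x` if `x ≥ 1` and `0` otherwise. -/
noncomputable def logPlus (x : ℝ) : ℝ := Real.log (max 1 x)

/-- A sequence of dimensions `f : ℕ → ℕ` has intermediate growth if
`limsup_n log⁺(f n) / n = 0`. -/
noncomputable def HasIntermediateGrowth (f : ℕ → ℕ) : Prop :=
  Filter.limsup (fun n : ℕ => logPlus (f n) / n) Filter.atTop = 0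

/-- The dimension of the degree-`n` homogeneous component of the symmetric algebra
on a positively graded vector space whose degree-`k` component has dimension `a k`:
it is the number of commutative monomials of weighted degree `n` in a family of
variables containing `a k` variables of weight `k` for each `k`. -/
noncomputable def symAlgebraGradeDim (a : ℕ → ℕ) (n : ℕ) : ℕ :=
  Nat.card {d : ((Σ k : ℕ, Fin (a k)) →₀ ℕ) // (d.sum fun i e => i.1 * e) = n}

open Filter Finset

section comb

variable (a : ℕ → ℕ)

-- each term of the weighted sum is at most the total
lemma term_le (n : ℕ) (d : (Σ k : ℕ, Fin (a k)) →₀ ℕ)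
    (hd : (d.sum fun i e => i.1 * e) = n) (i : Σ k : ℕ, Fin (a k)) :
    i.1 * d i ≤ n := by
  by_cases hi : i ∈ d.support
  · calc i.1 * d i ≤ ∑ j ∈ d.support, j.1 * d j :=
        Finset.single_le_sum (f := fun j => j.1 * d j) (fun j _ => Nat.zero_le _) hi
    _ = n := hd
  · simp [Finsupp.notMem_support_iff.mp hi]

lemma fst_pos (h0 : a 0 = 0) (i : Σ k : ℕ, Fin (a k)) : 1 ≤ i.1 := by
  rcases Nat.eq_zero_or_pos i.1 with h | h
  · exfalso; have := i.2; rw [h, h0] at this; exact this.elim0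
  · exact h

end comb

section inj

variable (a : ℕ → ℕ)

def toSmall (h0 : a 0 = 0) (n : ℕ)
    (d : {d : (Σ k : ℕ, Fin (a k)) →₀ ℕ // (d.sum fun i e => i.1 * e) = n}) :
    (Σ k : Fin (n+1), Fin (a k.1)) → Fin (n+1) := fun i =>
  ⟨d.1 ⟨i.1.1, i.2⟩, Nat.lt_succ_of_le (le_trans
      (Nat.le_mul_of_pos_left _ (fst_pos a h0 ⟨i.1.1, i.2⟩))
      (term_le a n d.1 d.2 ⟨i.1.1, i.2⟩))⟩

lemma support_fst_le (h0 : a 0 = 0) (n : ℕ)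
    (d : {d : (Σ k : ℕ, Fin (a k)) →₀ ℕ // (d.sum fun i e => i.1 * e) = n})
    (i : Σ k : ℕ, Fin (a k)) (hi : d.1 i ≠ 0) : i.1 ≤ n := by
  have h1 := term_le a n d.1 d.2 i
  have h2 : 1 ≤ d.1 i := Nat.pos_of_ne_zero hi
  nlinarith

lemma toSmall_injective (h0 : a 0 = 0) (n : ℕ) :
    Function.Injective (toSmall a h0 n) := by
  intro d e h
  apply Subtype.ext; apply Finsupp.ext
  rintro ⟨k, j⟩
  rcases le_or_gt k n with hk | hk
  · have h2 := congrArg Fin.val (congrFun h ⟨⟨k, Nat.lt_succ_of_le hk⟩, j⟩)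
    exact h2
  · have hd : d.1 ⟨k, j⟩ = 0 := by
      by_contra hne
      exact absurd (support_fst_le a h0 n d ⟨k, j⟩ hne) (Nat.not_le.mpr hk)
    have he : e.1 ⟨k, j⟩ = 0 := by
      by_contra hne
      exact absurd (support_fst_le a h0 n e ⟨k, j⟩ hne) (Nat.not_le.mpr hk)
    rw [hd, he]

noncomputable def subFintype (h0 : a 0 = 0) (n : ℕ) :
    Fintype {d : (Σ k : ℕ, Fin (a k)) →₀ ℕ // (d.sum fun i e => i.1 * e) = n} :=
  Fintype.ofInjective _ (toSmall_injective a h0 n)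

lemma weight_eq (h0 : a 0 = 0) (n : ℕ)
    (d : {d : (Σ k : ℕ, Fin (a k)) →₀ ℕ // (d.sum fun i e => i.1 * e) = n}) :
    ∑ i : (Σ k : Fin (n+1), Fin (a k.1)), (i.1 : ℕ) * (toSmall a h0 n d i : ℕ) = n := by
  classical
  set g : (Σ k : Fin (n+1), Fin (a k.1)) → (Σ k : ℕ, Fin (a k)) :=
    Sigma.map Fin.val (fun _ => id) with hg
  have ginj : Function.Injective g :=
    Function.Injective.sigma_map Fin.val_injective (fun _ => Function.injective_id)
  have hsub : d.1.support ⊆ Finset.univ.map ⟨g, ginj⟩ := by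
    intro x hx
    rw [Finset.mem_map]
    obtain ⟨k, j⟩ := x
    have hk : k ≤ n := support_fst_le a h0 n d ⟨k, j⟩ (Finsupp.mem_support_iff.mp hx)
    exact ⟨⟨⟨k, Nat.lt_succ_of_le hk⟩, j⟩, Finset.mem_univ _, rfl⟩
  have key := Finsupp.sum_of_support_subset d.1 hsub (fun i e => i.1 * e)
    (fun i _ => by simp)
  have key2 : (d.1.sum fun i e => i.1 * e)
      = ∑ i : (Σ k : Fin (n+1), Fin (a k.1)), (i.1 : ℕ) * (toSmall a h0 n d i : ℕ) := by
    rw [key, Finset.sum_map]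
    rfl
  rw [d.2] at key2
  exact key2.symm

end inj

lemma geom_bound (x : ℝ) (hx0 : 0 ≤ x) (hx1 : x < 1) (m : ℕ) :
    ∑ e ∈ Finset.range m, x ^ e ≤ (1 - x)⁻¹ := by
  have h1x : 0 < 1 - x := by linarith
  have heq : ∑ e ∈ Finset.range m, x ^ e = (1 - x ^ m) / (1 - x) := by
    rw [geom_sum_eq (by linarith)]
    rw [div_eq_div_iff (by linarith) (by linarith)]
    ring
  rw [heq, div_le_iff₀ h1x, inv_mul_cancel₀ (ne_of_gt h1x)]
  linarith [pow_nonneg hx0 m]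

lemma keyBound (a : ℕ → ℕ) (h0 : a 0 = 0) (n : ℕ) (r : ℝ) (hr0 : 0 < r) (hr1 : r < 1) :
    (symAlgebraGradeDim a n : ℝ) * r ^ n ≤
      ∏ k ∈ Finset.range (n+1), ((1 - r ^ k)⁻¹) ^ (a k) := by
  classical
  letI : Fintype {d : (Σ k : ℕ, Fin (a k)) →₀ ℕ // (d.sum fun i e => i.1 * e) = n} :=
    subFintype a h0 n
  set F : ((Σ k : Fin (n+1), Fin (a k.1)) → Fin (n+1)) → ℝ :=
    fun g => ∏ i : (Σ k : Fin (n+1), Fin (a k.1)), r ^ ((i.1 : ℕ) * (g i : ℕ)) with hF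
  have hFnonneg : ∀ g, 0 ≤ F g := fun g =>
    Finset.prod_nonneg (fun i _ => pow_nonneg hr0.le _)
  have e0 : (symAlgebraGradeDim a n : ℝ) * r ^ n
      = ∑ d : {d : (Σ k : ℕ, Fin (a k)) →₀ ℕ // (d.sum fun i e => i.1 * e) = n},
          F (toSmall a h0 n d) := by
    have e2 : ∀ d, F (toSmall a h0 n d) = r ^ n := by
      intro d
      show ∏ i : (Σ k : Fin (n+1), Fin (a k.1)),
          r ^ ((i.1 : ℕ) * ((toSmall a h0 n d) i : ℕ)) = r ^ n
      rw [Finset.prod_pow_eq_pow_sum, weight_eq a h0 n d]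
    rw [Finset.sum_congr rfl (fun d _ => e2 d), Finset.sum_const, Finset.card_univ,
      nsmul_eq_mul, symAlgebraGradeDim, Nat.card_eq_fintype_card]
  rw [e0]
  have e1 : ∑ d : {d : (Σ k : ℕ, Fin (a k)) →₀ ℕ // (d.sum fun i e => i.1 * e) = n},
      F (toSmall a h0 n d) ≤ ∑ g : (Σ k : Fin (n+1), Fin (a k.1)) → Fin (n+1), F g := by
    rw [← Finset.sum_image (fun x _ y _ h => toSmall_injective a h0 n h)]
    exact Finset.sum_le_sum_of_subset_of_nonneg (Finset.subset_univ _)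
      (fun g _ _ => hFnonneg g)
  refine e1.trans ?_
  have e3 : ∑ g : (Σ k : Fin (n+1), Fin (a k.1)) → Fin (n+1), F g
      = ∏ i : (Σ k : Fin (n+1), Fin (a k.1)), ∑ e : Fin (n+1), r ^ ((i.1 : ℕ) * (e : ℕ)) := by
    rw [Finset.prod_univ_sum]
    rw [Fintype.piFinset_univ]
  rw [e3]
  have e4 : ∏ i : (Σ k : Fin (n+1), Fin (a k.1)), ∑ e : Fin (n+1), r ^ ((i.1 : ℕ) * (e : ℕ))
      ≤ ∏ i : (Σ k : Fin (n+1), Fin (a k.1)), (1 - r ^ (i.1 : ℕ))⁻¹ := by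
    apply Finset.prod_le_prod
    · intro i _
      exact Finset.sum_nonneg (fun e _ => pow_nonneg hr0.le _)
    · intro i _
      have : ∑ e : Fin (n+1), r ^ ((i.1 : ℕ) * (e : ℕ))
          = ∑ e ∈ Finset.range (n+1), (r ^ (i.1 : ℕ)) ^ e := by
        rw [Fin.sum_univ_eq_sum_range (fun e => r ^ ((i.1 : ℕ) * e))]
        exact Finset.sum_congr rfl (fun e _ => by rw [pow_mul])
      rw [this]
      have hk : 1 ≤ ((i.1 : Fin (n+1)) : ℕ) := fst_pos a h0 ⟨(i.1 : ℕ), i.2⟩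
      exact geom_bound _ (pow_nonneg hr0.le _) (pow_lt_one₀ hr0.le hr1 (by omega)) _
  refine e4.trans ?_
  rw [← Finset.univ_sigma_univ, Finset.prod_sigma]
  rw [← Fin.prod_univ_eq_prod_range (fun k => ((1 - r ^ k)⁻¹) ^ (a k)) (n+1)]
  exact le_of_eq (Finset.prod_congr rfl (fun k _ => by
    simp [Finset.prod_const]))

lemma logPlus_nonneg (x : ℝ) : 0 ≤ logPlus x := Real.log_nonneg (le_max_left _ _)

lemma logPlus_le_log {x y : ℝ} (hy : 1 ≤ y) (h : x ≤ y) : logPlus x ≤ Real.log y := by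
  unfold logPlus
  exact Real.log_le_log (by positivity) (max_le hy h)

lemma logPlus_mono {x y : ℝ} (h : x ≤ y) : logPlus x ≤ logPlus y :=
  Real.log_le_log (by positivity) (max_le_max le_rfl h)

lemma limsup_of_not_bounded {u : ℕ → ℝ}
    (h : ¬ Filter.IsBoundedUnder (· ≤ ·) Filter.atTop u) :
    Filter.limsup u Filter.atTop = 0 := by
  rw [Filter.limsup_eq]
  convert Real.sInf_empty
  case e'_2 => rfl
  rw [Set.eq_empty_iff_forall_notMem]
  intro b hb
  exact h ⟨b, by simpa [Filter.eventually_map] using hb⟩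

lemma limsup_eq_zero_of_small {u : ℕ → ℝ} (hnn : ∀ n, 0 ≤ u n)
    (h : ∀ ε > 0, ∀ᶠ n in Filter.atTop, u n ≤ ε) :
    Filter.limsup u Filter.atTop = 0 := by
  have ht : Filter.Tendsto u Filter.atTop (nhds 0) := by
    rw [tendsto_order]
    constructor
    · intro b hb
      exact Filter.Eventually.of_forall (fun n => lt_of_lt_of_le hb (hnn n))
    · intro b hb
      filter_upwards [h (b/2) (by linarith)] with n hn
      linarith
  exact ht.limsup_eq

lemma le_symAlg (a : ℕ → ℕ) (h0 : a 0 = 0) (n : ℕ) :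
    a n ≤ symAlgebraGradeDim a n := by
  letI := subFintype a h0 n
  rw [symAlgebraGradeDim, Nat.card_eq_fintype_card]
  have hinj : Function.Injective (fun j : Fin (a n) =>
      (⟨Finsupp.single ⟨n, j⟩ 1, by simp⟩ :
        {d : (Σ k : ℕ, Fin (a k)) →₀ ℕ // (d.sum fun i e => i.1 * e) = n})) := by
    intro j j' h
    have h2 := congrArg Subtype.val h
    have h3 := Finsupp.single_left_injective (α := Σ k : ℕ, Fin (a k)) one_ne_zero h2
    simpa using h3
  calc a n = Fintype.card (Fin (a n)) := (Fintype.card_fin _).symm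
  _ ≤ _ := Fintype.card_le_of_injective _ hinj

lemma main_small (a : ℕ → ℕ) (h0 : a 0 = 0)
    (hsmall : ∀ ε > 0, ∀ᶠ k in Filter.atTop, logPlus (a k) / k ≤ ε) :
    ∀ ε > 0, ∀ᶠ n in Filter.atTop, logPlus (symAlgebraGradeDim a n) / n ≤ ε := by
  intro ε hε
  set r : ℝ := Real.exp (-(ε/4)) with hr
  have hr0 : 0 < r := Real.exp_pos _
  have hr1 : r < 1 := by rw [hr, Real.exp_lt_one_iff]; linarith
  set t : ℝ := Real.exp (-(ε/8)) with ht
  have ht0 : 0 < t := Real.exp_pos _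
  have ht1 : t < 1 := by rw [ht, Real.exp_lt_one_iff]; linarith
  obtain ⟨K, hK⟩ := (Filter.eventually_atTop).mp (hsmall (ε/8) (by linarith))
  have hbound : ∀ k, K ≤ k → (a k : ℝ) * r ^ k ≤ t ^ k := by
    intro k hk
    rcases Nat.eq_zero_or_pos (a k) with hak | hak
    · rw [hak]; simp; positivity
    rcases Nat.eq_zero_or_pos k with rfl | hkpos
    · rw [h0] at hak; exact absurd hak (lt_irrefl 0)
    have h1 : logPlus (a k) ≤ k * (ε/8) := by
      have h := hK k hk
      rw [div_le_iff₀ (by positivity : (0:ℝ) < (k:ℝ))] at h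
      linarith
    have h2 : logPlus ((a k : ℕ) : ℝ) = Real.log (a k) := by
      unfold logPlus
      rw [max_eq_right (by exact_mod_cast hak : (1:ℝ) ≤ (a k : ℝ))]
    have h3 : (a k : ℝ) ≤ Real.exp (k * (ε/8)) := by
      rw [h2] at h1
      calc (a k : ℝ) = Real.exp (Real.log (a k)) :=
            (Real.exp_log (by exact_mod_cast hak)).symm
      _ ≤ _ := Real.exp_le_exp.mpr h1
    have h4 : Real.exp (k * (ε/8)) * r ^ k = t ^ k := by
      rw [hr, ht, ← Real.exp_nat_mul, ← Real.exp_nat_mul, ← Real.exp_add]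
      ring_nf
    calc (a k : ℝ) * r ^ k ≤ Real.exp (k*(ε/8)) * r ^ k :=
          mul_le_mul_of_nonneg_right h3 (by positivity)
    _ = t ^ k := h4
  set C : ℝ := (∑ k ∈ Finset.range K, (a k : ℝ) * r ^ k) + (1 - t)⁻¹ with hC
  have hC0 : 0 ≤ C := by
    rw [hC]
    have : (0:ℝ) ≤ (1 - t)⁻¹ := by
      have : (0:ℝ) < 1 - t := by linarith
      positivity
    have hsum : (0:ℝ) ≤ ∑ k ∈ Finset.range K, (a k : ℝ) * r ^ k :=
      Finset.sum_nonneg (fun k _ => by positivity)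
    linarith
  have hCsum : ∀ n, ∑ k ∈ Finset.range (n+1), (a k : ℝ) * r ^ k ≤ C := by
    intro n
    have step : ∀ k ∈ Finset.range (n+1), (a k : ℝ) * r ^ k ≤
        (if k < K then (a k : ℝ) * r ^ k else 0) + t ^ k := by
      intro k _
      by_cases hk : k < K
      · simp only [hk, if_true]
        have : (0:ℝ) ≤ t ^ k := by positivity
        linarith
      · simp only [hk, if_false, zero_add]
        exact hbound k (le_of_not_gt hk)
    calc ∑ k ∈ Finset.range (n+1), (a k:ℝ) * r^k
        ≤ ∑ k ∈ Finset.range (n+1), ((if k < K then (a k : ℝ) * r ^ k else 0) + t ^ k) :=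
          Finset.sum_le_sum step
    _ = (∑ k ∈ Finset.range (n+1), if k < K then (a k:ℝ)*r^k else 0)
        + ∑ k ∈ Finset.range (n+1), t ^ k := Finset.sum_add_distrib
    _ ≤ (∑ k ∈ Finset.range K, (a k:ℝ)*r^k) + (1-t)⁻¹ := by
        apply add_le_add
        · rw [← Finset.sum_filter]
          apply Finset.sum_le_sum_of_subset_of_nonneg
          · intro x hx
            simp only [Finset.mem_filter, Finset.mem_range] at hx ⊢
            exact hx.2
          · intro k _ _; positivity
        · exact geom_bound t ht0.le ht1 _
    _ = C := hC.symm
  have h1r : (0:ℝ) < 1 - r := by linarith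
  have hfac : ∀ k,
      ((1 - r ^ k)⁻¹) ^ (a k) ≤ Real.exp ((1 - r)⁻¹ * ((a k : ℝ) * r ^ k)) := by
    intro k
    rcases Nat.eq_zero_or_pos k with rfl | hk
    · rw [h0]; simp
    have hrk1 : r ^ k < 1 := pow_lt_one₀ hr0.le hr1 (by omega)
    have hrkr : r ^ k ≤ r := by
      calc r ^ k ≤ r ^ 1 := pow_le_pow_of_le_one hr0.le hr1.le hk
      _ = r := pow_one r
    have h1rk : 0 < 1 - r ^ k := by linarith
    have h5 : (1 - r ^ k)⁻¹ ≤ Real.exp ((1 - r)⁻¹ * r ^ k) := by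
      have e1 : (1 - r ^ k)⁻¹ = 1 + r ^ k / (1 - r ^ k) := by field_simp; ring
      have e2 : r ^ k / (1 - r ^ k) ≤ r ^ k / (1 - r) := by
        apply div_le_div_of_nonneg_left (by positivity) h1r
        linarith
      have e3 : (1:ℝ) + (1 - r)⁻¹ * r ^ k ≤ Real.exp ((1 - r)⁻¹ * r ^ k) := by
        have := Real.add_one_le_exp ((1 - r)⁻¹ * r ^ k)
        linarith
      have e4 : r ^ k / (1 - r) = (1 - r)⁻¹ * r ^ k := by
        rw [div_eq_mul_inv, mul_comm]
      rw [e1]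
      rw [e4] at e2
      linarith
    calc ((1 - r ^ k)⁻¹) ^ a k ≤ (Real.exp ((1-r)⁻¹ * r^k)) ^ a k :=
          pow_le_pow_left₀ (by positivity) h5 _
    _ = Real.exp ((1-r)⁻¹ * ((a k:ℝ) * r ^ k)) := by
          rw [← Real.exp_nat_mul]; ring_nf
  have hEbound : ∀ n, (symAlgebraGradeDim a n : ℝ) * r ^ n ≤ Real.exp ((1-r)⁻¹ * C) := by
    intro n
    calc (symAlgebraGradeDim a n : ℝ) * r ^ n
        ≤ ∏ k ∈ Finset.range (n+1), ((1 - r^k)⁻¹)^(a k) := keyBound a h0 n r hr0 hr1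
    _ ≤ ∏ k ∈ Finset.range (n+1), Real.exp ((1-r)⁻¹ * ((a k:ℝ) * r^k)) := by
        apply Finset.prod_le_prod
        · intro k _
          have h6 : r ^ k ≤ 1 := pow_le_one₀ hr0.le hr1.le
          have h7 : (0:ℝ) ≤ (1 - r ^ k)⁻¹ := by
            rcases eq_or_lt_of_le h6 with h | h
            · rw [h]; simp
            · have : 0 < 1 - r ^ k := by linarith
              positivity
          positivity
        · intro k _; exact hfac k
    _ = Real.exp (∑ k ∈ Finset.range (n+1), (1-r)⁻¹ * ((a k:ℝ) * r^k)) :=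
        (Real.exp_sum _ _).symm
    _ ≤ Real.exp ((1-r)⁻¹ * C) := by
        rw [← Finset.mul_sum]
        exact Real.exp_le_exp.mpr (mul_le_mul_of_nonneg_left (hCsum n) (by positivity))
  set C2 : ℝ := (1-r)⁻¹ * C with hC2def
  have hC2 : 0 ≤ C2 := mul_nonneg (by positivity) hC0
  have hfinal : ∀ n : ℕ, logPlus (symAlgebraGradeDim a n) ≤ C2 + n * (ε/4) := by
    intro n
    have hb : (symAlgebraGradeDim a n : ℝ) ≤ Real.exp C2 * (r⁻¹) ^ n := by
      calc (symAlgebraGradeDim a n : ℝ)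
          = (symAlgebraGradeDim a n : ℝ) * r ^ n * (r⁻¹) ^ n := by
            rw [mul_assoc, ← mul_pow, mul_inv_cancel₀ (ne_of_gt hr0), one_pow, mul_one]
      _ ≤ Real.exp C2 * (r⁻¹) ^ n :=
            mul_le_mul_of_nonneg_right (hEbound n) (by positivity)
    have hrinv : (1:ℝ) ≤ r⁻¹ := (one_le_inv₀ hr0).mpr hr1.le
    have h1 : (1:ℝ) ≤ Real.exp C2 * (r⁻¹)^n := by
      have e1 : (1:ℝ) ≤ Real.exp C2 := Real.one_le_exp hC2
      have e2 : (1:ℝ) ≤ (r⁻¹)^n := one_le_pow₀ hrinv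
      nlinarith
    calc logPlus (symAlgebraGradeDim a n)
        ≤ Real.log (Real.exp C2 * (r⁻¹)^n) := logPlus_le_log h1 hb
    _ = C2 + n * (ε/4) := by
        rw [Real.log_mul (by positivity) (by positivity), Real.log_exp, Real.log_pow,
          Real.log_inv, hr, Real.log_exp]
        ring
  have htend : Filter.Tendsto (fun n : ℕ => C2 / n) Filter.atTop (nhds 0) :=
    tendsto_const_div_atTop_nhds_zero_nat C2
  have hev : ∀ᶠ n : ℕ in Filter.atTop, C2 / n < ε/2 :=
    htend.eventually_lt_const (by linarith)
  filter_upwards [hev, Filter.eventually_ge_atTop 1] with n h1 h2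
  have hn0 : (0:ℝ) < (n:ℝ) := by exact_mod_cast h2
  calc logPlus (symAlgebraGradeDim a n) / n ≤ (C2 + n * (ε/4)) / n := by
        gcongr
        exact hfinal n
  _ = C2 / n + ε/4 := by
        field_simp
  _ ≤ ε := by linarith


/-- Let `M = ⊕_{n ≥ 1} M_n` be a positively graded vector space with
finite-dimensional homogeneous components having intermediate growth.  Then the
symmetric algebra `S(M)`, with its induced grading, also has intermediate growth. -/
theorem symmetricAlgebra_intermediateGrowth
    (K V : Type*) [Field K] [AddCommGroup V] [Module K V]
    (comp : ℕ → Submodule K V) (hint : DirectSum.IsInternal comp)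
    (h0 : comp 0 = ⊥) (hfd : ∀ n, FiniteDimensional K (comp n))
    (hgrowth : HasIntermediateGrowth fun n => Module.finrank K (comp n)) :
    HasIntermediateGrowth (symAlgebraGradeDim fun n => Module.finrank K (comp n)) := by
  set a : ℕ → ℕ := fun n => Module.finrank K (comp n) with ha
  have ha0 : a 0 = 0 := by
    show Module.finrank K (comp 0) = 0
    rw [show comp 0 = ⊥ from h0]
    exact finrank_bot K V
  unfold HasIntermediateGrowth at hgrowth ⊢
  by_cases hbdd : Filter.IsBoundedUnder (· ≤ ·) Filter.atTop
      (fun n : ℕ => logPlus (a n) / n)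
  · have hsmall : ∀ ε > 0, ∀ᶠ k in Filter.atTop, logPlus (a k) / k ≤ ε := by
      intro ε hε
      have hlt : Filter.limsup (fun n : ℕ => logPlus (a n) / n) Filter.atTop < ε := by
        rw [hgrowth]; exact hε
      filter_upwards [Filter.eventually_lt_of_limsup_lt hlt hbdd] with n hn
      exact hn.le
    apply limsup_eq_zero_of_small
    · intro n; exact div_nonneg (logPlus_nonneg _) (Nat.cast_nonneg n)
    · exact main_small a ha0 hsmall
  · apply limsup_of_not_bounded
    intro hb
    apply hbdd
    obtain ⟨c, hc⟩ := hb
    refine ⟨c, ?_⟩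
    rw [Filter.eventually_map] at hc ⊢
    rw [Filter.eventually_atTop] at hc ⊢
    obtain ⟨N, hN⟩ := hc
    refine ⟨max N 1, fun n hn => ?_⟩
    have h1 : 1 ≤ n := le_trans (le_max_right _ _) hn
    have h2 := hN n (le_trans (le_max_left _ _) hn)
    refine le_trans ?_ h2
    gcongr
    exact logPlus_mono (by exact_mod_cast le_symAlg a ha0 n)
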